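/- Let p be a positive integer and let r_p ∈ (0,1) be the maximal root in (0,1) of 8 r^{2p} + r^{2(p-1)} − 6 r^{p-1} + 1 = 0. Set a = (1 − √(1 − r_p^{2p})/√2)/r_p^p and define f(z) = z (z^p − a)/(1 − a z^p) for z ∈ 𝔻. Then f is analytic in 𝔻 with |f(z)| ≤ 1 for all z ∈ 𝔻, f is p-symmetric with Taylor coefficients a_{pk+1}, and ∑_{k≥0} |a_{pk+1}| r_p^{pk+1} = 1; that is, f is extremal for the Bohr radius r_p of the class of p-symmetric self-maps of 𝔻. -/

import Mathlib

set_option maxHeartbeats 1600000 in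
/-- The function `f(z) = z (z^p - a)/(1 - a z^p)` with
`a = (1 - √(1 - r_p^{2p})/√2)/r_p^p` is an extremal function for the Bohr radius `r_p`
of the class of `p`-symmetric self-maps of the unit disk: it is analytic in 𝔻, bounded
by `1` there, `p`-symmetric, and its majorant series at `r = r_p` equals `1`. -/
theorem extremal_p_symmetric (p : ℕ) (hp : 0 < p)
    (rp : ℝ) (hrp : rp ∈ Set.Ioo (0 : ℝ) 1)
    (hroot : 8 * rp ^ (2 * p) + rp ^ (2 * (p - 1)) - 6 * rp ^ (p - 1) + 1 = 0)
    (hmax : ∀ s ∈ Set.Ioo (0 : ℝ) 1,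
      8 * s ^ (2 * p) + s ^ (2 * (p - 1)) - 6 * s ^ (p - 1) + 1 = 0 → s ≤ rp)
    (a : ℝ) (ha : a = (1 - Real.sqrt (1 - rp ^ (2 * p)) / Real.sqrt 2) / rp ^ p)
    (f : ℂ → ℂ) (hf : ∀ z : ℂ, f z = z * (z ^ p - (a : ℂ)) / (1 - (a : ℂ) * z ^ p)) :
    AnalyticOn ℂ f (Metric.ball (0 : ℂ) 1) ∧
    (∀ z ∈ Metric.ball (0 : ℂ) 1, ‖f z‖ ≤ 1) ∧
    ∃ c : ℕ → ℂ,
      (∀ z ∈ Metric.ball (0 : ℂ) 1, HasSum (fun k : ℕ => c k * z ^ (p * k + 1)) (f z)) ∧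
      ∑' k : ℕ, ‖c k‖ * rp ^ (p * k + 1) = 1 := by
  obtain ⟨hrp0, hrp1⟩ := hrp
  set t : ℝ := rp ^ p with ht
  set s : ℝ := rp ^ (p - 1) with hs
  have ht0 : 0 < t := pow_pos hrp0 p
  have ht1 : t < 1 := pow_lt_one₀ hrp0.le hrp1 hp.ne'
  have hs0 : 0 < s := pow_pos hrp0 _
  have hs1 : s ≤ 1 := pow_le_one₀ hrp0.le hrp1.le
  have hts : t = rp * s := by
    rw [ht, hs, ← pow_succ']
    congr 1
    omega
  have h2p : rp ^ (2 * p) = t ^ 2 := by rw [ht, ← pow_mul, mul_comm]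
  have h2p1 : rp ^ (2 * (p - 1)) = s ^ 2 := by rw [hs, ← pow_mul, mul_comm]
  have hroot' : 8 * t ^ 2 + s ^ 2 - 6 * s + 1 = 0 := by rw [← h2p, ← h2p1]; exact hroot
  set u : ℝ := Real.sqrt ((1 - t ^ 2) / 2) with hu
  have hu_nonneg : 0 ≤ u := Real.sqrt_nonneg _
  have hu2 : u ^ 2 = (1 - t ^ 2) / 2 := by
    rw [hu, Real.sq_sqrt]
    nlinarith [ht0, ht1]
  have h2' : 2 * u ^ 2 = 1 - t ^ 2 := by linarith
  have ha' : a = (1 - u) / t := by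
    rw [ha, hu, h2p, Real.sqrt_div (by nlinarith [ht0, ht1]) 2]
  -- s > 1/3, via the maximality hypothesis and IVT for p ≥ 2
  have hs3 : 1 / 3 < s := by
    rcases Nat.lt_or_ge p 2 with hp2 | hp2
    · interval_cases p
      norm_num [hs]
    · have hn0 : p - 1 ≠ 0 := by omega
      have hnR : ((p - 1 : ℕ) : ℝ) ≠ 0 := Nat.cast_ne_zero.mpr hn0
      set r0 : ℝ := (3 : ℝ) ^ (-(1 : ℝ) / (p - 1 : ℕ)) with hr0
      have hr0pos : 0 < r0 := Real.rpow_pos_of_pos (by norm_num) _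
      have hr0lt1 : r0 < 1 := by
        apply Real.rpow_lt_one_of_one_lt_of_neg (by norm_num)
        rw [div_neg_iff]
        right
        constructor
        · norm_num
        · exact lt_of_le_of_ne (Nat.cast_nonneg _) (Ne.symm hnR)
      have hr0n : r0 ^ (p - 1) = 1 / 3 := by
        rw [hr0, ← Real.rpow_natCast ((3:ℝ) ^ (-(1:ℝ) / (p - 1 : ℕ))) (p - 1),
          ← Real.rpow_mul (by norm_num)]
        rw [div_mul_cancel₀ _ hnR]
        rw [Real.rpow_neg_one]
        norm_num
      have hr02p : r0 ^ (2 * p) = (1 / 9) * r0 ^ 2 := by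
        have : 2 * p = 2 * (p - 1) + 2 := by omega
        rw [this, pow_add, mul_comm 2 (p - 1), pow_mul, hr0n]
        norm_num
      have hr02p1 : r0 ^ (2 * (p - 1)) = 1 / 9 := by
        rw [mul_comm 2 (p - 1), pow_mul, hr0n]
        norm_num
      set g : ℝ → ℝ := fun r => 8 * r ^ (2 * p) + r ^ (2 * (p - 1)) - 6 * r ^ (p - 1) + 1
        with hg
      have hgr0 : g r0 < 0 := by
        have : r0 ^ 2 < 1 := by nlinarith
        simp only [hg, hr02p, hr02p1, hr0n]
        nlinarith
      have hg1 : g 1 = 4 := by norm_num [hg]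
      have hcont : ContinuousOn g (Set.Icc r0 1) := by
        apply Continuous.continuousOn
        fun_prop
      have h0mem : (0 : ℝ) ∈ Set.Ioo (g r0) (g 1) := by
        constructor
        · exact hgr0
        · rw [hg1]; norm_num
      obtain ⟨r, hrmem, hgr⟩ := intermediate_value_Ioo hr0lt1.le hcont h0mem
      have hr01 : r ∈ Set.Ioo (0 : ℝ) 1 := ⟨lt_trans hr0pos hrmem.1, hrmem.2⟩
      have hrle : r ≤ rp := hmax r hr01 hgr
      have hlt : r0 < rp := lt_of_lt_of_le hrmem.1 hrle
      calc (1 : ℝ) / 3 = r0 ^ (p - 1) := hr0n.symm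
        _ < rp ^ (p - 1) := pow_lt_pow_left₀ hlt hr0pos.le hn0
  have h4u : 4 * u = 3 - s := by
    have hsq : (4 * u - (3 - s)) * (4 * u + (3 - s)) = 0 := by
      linear_combination 8 * h2' - hroot'
    rcases mul_eq_zero.mp hsq with h | h
    · linarith
    · linarith
  have hu_pos : 0 < u := by linarith
  have hu_lt1 : u < 1 := by linarith
  have hat : a * t = 1 - u := by
    rw [ha', div_mul_cancel₀ _ ht0.ne']
  have ha_pos : 0 < a := by
    rw [ha']
    exact div_pos (by linarith) ht0
  have ha_lt1 : a < 1 := by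
    have h16 : (1 + s) ^ 2 < (4 * t) ^ 2 := by
      nlinarith [hroot', mul_pos (show (0:ℝ) < 3 * s - 1 by linarith)
        (show (0:ℝ) < 3 - s by linarith)]
    have h4t : 1 + s < 4 * t := by
      by_contra h
      push_neg at h
      have := pow_le_pow_left₀ (by positivity) h 2
      linarith
    rw [ha', div_lt_one ht0]
    linarith
  -- key identity: majorant sum equals 1
  have hE : (a * rp * u + (1 - a ^ 2) * (rp * t) - u) * t ^ 2 = 0 := by
    linear_combination (rp * t * (2 * u - 1 - a * t)) * hat + (rp * t) * h2'
      + (-(rp * t * u)) * h4u + (-(u * t)) * hts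
  have hkey0 : a * rp * u + (1 - a ^ 2) * (rp * t) = u := by
    rcases mul_eq_zero.mp hE with h | h
    · linarith
    · exact absurd h (pow_ne_zero 2 ht0.ne')
  have hkey : a * rp + (1 - a ^ 2) * (rp * t) * u⁻¹ = 1 := by
    field_simp
    linear_combination hkey0
  -- complex basics
  have haC : ‖(a : ℂ)‖ = a := by
    rw [Complex.norm_real, Real.norm_of_nonneg ha_pos.le]
  have hden : ∀ z ∈ Metric.ball (0 : ℂ) 1, ‖(a : ℂ) * z ^ p‖ < 1 := by
    intro z hz
    rw [mem_ball_zero_iff] at hz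
    rw [norm_mul, haC, norm_pow]
    have h1 : ‖z‖ ^ p ≤ 1 := pow_le_one₀ (norm_nonneg z) hz.le
    nlinarith [pow_nonneg (norm_nonneg z) p]
  have hden' : ∀ z ∈ Metric.ball (0 : ℂ) 1, (1 : ℂ) - (a : ℂ) * z ^ p ≠ 0 := by
    intro z hz h
    have h1 : (a : ℂ) * z ^ p = 1 := by linear_combination -h
    have h2 := hden z hz
    rw [h1, norm_one] at h2
    exact lt_irrefl _ h2
  refine ⟨?_, ?_, ?_⟩
  · -- analytic
    have hA : AnalyticOnNhd ℂ f (Metric.ball (0 : ℂ) 1) := by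
      intro z hz
      have hA1 : AnalyticAt ℂ (fun z : ℂ => z * (z ^ p - (a : ℂ)) / (1 - (a : ℂ) * z ^ p)) z := by
        apply AnalyticAt.div
        · exact analyticAt_id.mul ((analyticAt_id.pow p).sub analyticAt_const)
        · exact analyticAt_const.sub (analyticAt_const.mul (analyticAt_id.pow p))
        · exact hden' z hz
      exact hA1.congr (Filter.Eventually.of_forall fun w => (hf w).symm)
    exact hA.analyticOn
  · -- bounded by 1
    intro z hz
    have hz1 : ‖z‖ < 1 := mem_ball_zero_iff.mp hz
    rw [hf, norm_div, norm_mul]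
    have h0 := hden' z hz
    rw [div_le_one (norm_pos_iff.mpr h0)]
    set w : ℂ := z ^ p with hw
    have hw1 : ‖w‖ ≤ 1 := by
      rw [hw, norm_pow]
      exact pow_le_one₀ (norm_nonneg z) hz1.le
    have hw2 : w.re ^ 2 + w.im ^ 2 ≤ 1 := by
      have := Complex.normSq_apply w
      have h2 : Complex.normSq w = ‖w‖ ^ 2 := by
        rw [Complex.normSq_eq_norm_sq]
      nlinarith [norm_nonneg w]
    have e1 : ‖w - (a : ℂ)‖ ^ 2 = w.re ^ 2 + w.im ^ 2 - 2 * a * w.re + a ^ 2 := by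
      rw [Complex.sq_norm, Complex.normSq_apply]
      simp [Complex.sub_re, Complex.sub_im]
      ring
    have e2 : ‖1 - (a : ℂ) * w‖ ^ 2 = 1 - 2 * a * w.re + a ^ 2 * (w.re ^ 2 + w.im ^ 2) := by
      rw [Complex.sq_norm, Complex.normSq_apply]
      simp [Complex.sub_re, Complex.sub_im, Complex.mul_re, Complex.mul_im]
      ring
    have hsq : ‖w - (a : ℂ)‖ ^ 2 ≤ ‖1 - (a : ℂ) * w‖ ^ 2 := by
      rw [e1, e2]
      nlinarith [mul_nonneg (show (0:ℝ) ≤ 1 - a ^ 2 by nlinarith)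
        (show (0:ℝ) ≤ 1 - (w.re ^ 2 + w.im ^ 2) by linarith)]
    have hnum : ‖w - (a : ℂ)‖ ≤ ‖1 - (a : ℂ) * w‖ := by
      have := Real.sqrt_le_sqrt hsq
      rwa [Real.sqrt_sq (norm_nonneg _), Real.sqrt_sq (norm_nonneg _)] at this
    calc ‖z‖ * ‖w - (a : ℂ)‖ ≤ 1 * ‖1 - (a : ℂ) * w‖ :=
          mul_le_mul hz1.le hnum (norm_nonneg _) zero_le_one
      _ = ‖1 - (a : ℂ) * w‖ := one_mul _
  · -- the series
    set cr : ℕ → ℝ := fun k => if k = 0 then -a else (1 - a ^ 2) * a ^ (k - 1) with hcr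
    have hcr0 : cr 0 = -a := by simp [hcr]
    have hcrS : ∀ k : ℕ, cr (k + 1) = (1 - a ^ 2) * a ^ k := by
      intro k
      simp [hcr]
    refine ⟨fun k => (cr k : ℂ), ?_, ?_⟩
    · intro z hz
      have hg : HasSum (fun k : ℕ => ((a : ℂ) * z ^ p) ^ k) (1 - (a : ℂ) * z ^ p)⁻¹ :=
        hasSum_geometric_of_norm_lt_one (hden z hz)
      have h2 := hg.mul_left ((1 - (a : ℂ) ^ 2) * z ^ (p + 1))
      have h3 : HasSum (fun k : ℕ => (cr (k + 1) : ℂ) * z ^ (p * (k + 1) + 1))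
          ((1 - (a : ℂ) ^ 2) * z ^ (p + 1) * (1 - (a : ℂ) * z ^ p)⁻¹) := by
        refine h2.congr_fun fun k => ?_
        rw [hcrS k]
        push_cast
        rw [mul_pow, ← pow_mul]
        ring
      have h4 := (hasSum_nat_add_iff
        (f := fun k : ℕ => (cr k : ℂ) * z ^ (p * k + 1)) 1).mp h3
      simp only [Finset.range_one, Finset.sum_singleton] at h4
      rw [show f z = (1 - (a : ℂ) ^ 2) * z ^ (p + 1) * (1 - (a : ℂ) * z ^ p)⁻¹
          + (cr 0 : ℂ) * z ^ (p * 0 + 1) from ?_]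
      · exact h4
      rw [hf, hcr0]
      have hd := hden' z hz
      push_cast
      have hinv := inv_mul_cancel₀ hd
      rw [div_eq_mul_inv]
      linear_combination (-(a : ℂ) * z) * hinv
    · have hq0 : 0 ≤ a * t := by positivity
      have hq1 : a * t < 1 := by rw [hat]; linarith
      have hg : HasSum (fun k : ℕ => (a * t) ^ k) (1 - a * t)⁻¹ :=
        hasSum_geometric_of_lt_one hq0 hq1
      have h2 := hg.mul_left ((1 - a ^ 2) * rp ^ (p + 1))
      have h3 : HasSum (fun k : ℕ => ‖((cr (k + 1) : ℝ) : ℂ)‖ * rp ^ (p * (k + 1) + 1))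
          ((1 - a ^ 2) * rp ^ (p + 1) * (1 - a * t)⁻¹) := by
        refine h2.congr_fun fun k => ?_
        rw [Complex.norm_real, hcrS k,
          Real.norm_of_nonneg (mul_nonneg (by nlinarith) (pow_nonneg ha_pos.le k))]
        rw [ht, mul_pow, ← pow_mul]
        ring
      have h4 := (hasSum_nat_add_iff
        (f := fun k : ℕ => ‖((cr k : ℝ) : ℂ)‖ * rp ^ (p * k + 1)) 1).mp h3
      rw [h4.tsum_eq]
      simp only [Finset.range_one, Finset.sum_singleton, hcr0, mul_zero, zero_add, pow_one]
      have hna : ‖((-a : ℝ) : ℂ)‖ = a := by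
        rw [Complex.norm_real, norm_neg, Real.norm_of_nonneg ha_pos.le]
      rw [hna, hat]
      have hrpt : rp ^ (p + 1) = rp * t := by rw [ht, pow_succ, mul_comm]
      rw [hrpt]
      have h5 : (1 : ℝ) - (1 - u) = u := by ring
      rw [h5]
      linarith [hkey]
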